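/- Let E be a real inner product space and let u₁, …, u_m ∈ E be snapshots with correlation (Gram) matrix C, C_{ij} = ⟪u_i, u_j⟫. Let q₁, …, q_m ∈ ℝ^m be an orthonormal basis of eigenvectors of C with corresponding eigenvalues λ₁ ≥ λ₂ ≥ ⋯ ≥ λ_m ≥ 0 in decreasing order. Fix N ≤ m and assume λ_N > 0 (so λ₁, …, λ_N are all positive), and define the POD basis vectors φ_k := λ_k^{-1/2} ∑_{j=1}^m (q_k)_j u_j for k = 1, …, N. Then the POD basis attains the optimal projection error: ∑_{i=1}^m ‖u_i − ∑_{k=1}^N ⟪u_i, φ_k⟫ φ_k‖² = ∑_{j=N+1}^m λ_j, the sum of the m − N smallest eigenvalues of the correlation matrix. Consequently the POD minimization problem is solved by the basis constructed from the eigenvectors of C associated with the N largest eigenvalues. -/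

import Mathlib

open scoped BigOperators RealInnerProductSpace
open Matrix

/-- Optimality of the POD basis: the basis built from the eigenvectors of the
snapshot correlation (Gram) matrix `C` associated with the `N` largest
eigenvalues attains the optimal total squared projection error, namely the sum
of the `m − N` smallest eigenvalues of `C`. -/
theorem pod_basis_attains_optimal_error
    {E : Type*} [NormedAddCommGroup E] [InnerProductSpace ℝ E]
    (m : ℕ) (u : Fin m → E)
    (C : Matrix (Fin m) (Fin m) ℝ) (hC : ∀ i j, C i j = ⟪u i, u j⟫)
    (lam : Fin m → ℝ) (q : Fin m → (Fin m → ℝ))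
    (hlam_nonneg : ∀ j, 0 ≤ lam j)
    (hlam_mono : ∀ j k : Fin m, j ≤ k → lam k ≤ lam j)
    (heig : ∀ j, C.mulVec (q j) = lam j • q j)
    (hq_orthonormal : ∀ j k : Fin m,
      (∑ l, q j l * q k l) = if j = k then (1 : ℝ) else 0)
    (N : ℕ) (hN : N ≤ m)
    (hlam_pos : ∀ k : Fin m, (k : ℕ) < N → 0 < lam k)
    (φ : Fin N → E)
    (hφ : ∀ k : Fin N,
      φ k = (Real.sqrt (lam (Fin.castLE hN k)))⁻¹ •
        ∑ j, q (Fin.castLE hN k) j • u j) :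
    ∑ i, ‖u i - ∑ k, ⟪u i, φ k⟫ • φ k‖ ^ 2
      = ∑ j ∈ Finset.univ.filter (fun j : Fin m => N ≤ (j : ℕ)), lam j := by
  -- eigenvalue equation pointwise
  have heig' : ∀ (j i : Fin m), (∑ p, C i p * q j p) = lam j * q j i := by
    intro j i
    have := congrFun (heig j) i
    simpa [Matrix.mulVec, dotProduct] using this
  -- completeness: columns orthonormal
  have hQQ : ∀ i l : Fin m, (∑ j, q j i * q j l) = if i = l then (1 : ℝ) else 0 := by
    intro i l
    set Q : Matrix (Fin m) (Fin m) ℝ := Matrix.of fun j p => q j p with hQdef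
    have h1 : Q * Qᵀ = 1 := by
      ext j k
      simpa [Matrix.mul_apply, Matrix.one_apply, hQdef] using hq_orthonormal j k
    have h2 : Qᵀ * Q = 1 := mul_eq_one_comm.mp h1
    have := congrFun (congrFun h2 i) l
    simpa [Matrix.mul_apply, Matrix.one_apply, hQdef] using this
  -- spectral decomposition of C entrywise
  have hCdecomp : ∀ i l : Fin m, C i l = ∑ j, lam j * (q j i * q j l) := by
    intro i l
    have : C i l = ∑ p, C i p * (if p = l then (1:ℝ) else 0) := by
      simp
    rw [this]
    calc ∑ p, C i p * (if p = l then (1:ℝ) else 0)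
        = ∑ p, C i p * ∑ j, q j p * q j l := by
          refine Finset.sum_congr rfl fun p _ => ?_
          rw [hQQ p l]
      _ = ∑ j, (∑ p, C i p * q j p) * q j l := by
          simp only [Finset.mul_sum, Finset.sum_mul]
          rw [Finset.sum_comm]
          exact Finset.sum_congr rfl fun j _ => Finset.sum_congr rfl fun p _ => by ring
      _ = ∑ j, lam j * (q j i * q j l) := by
          refine Finset.sum_congr rfl fun j _ => ?_
          rw [heig' j i]; ring
  -- trace
  have htrace : ∑ i, C i i = ∑ j, lam j := by
    calc ∑ i, C i i = ∑ i, ∑ j, lam j * (q j i * q j i) := by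
          exact Finset.sum_congr rfl fun i _ => hCdecomp i i
      _ = ∑ j, lam j * ∑ i, q j i * q j i := by
          rw [Finset.sum_comm]; simp [Finset.mul_sum]
      _ = ∑ j, lam j := by
          refine Finset.sum_congr rfl fun j _ => ?_
          rw [hq_orthonormal j j]; simp
  -- inner products with φ
  have hsq : ∀ k : Fin N, Real.sqrt (lam (Fin.castLE hN k)) ≠ 0 := by
    intro k
    have := hlam_pos (Fin.castLE hN k) (by simpa using k.isLt)
    positivity
  have hinner : ∀ (i : Fin m) (k : Fin N),
      ⟪u i, φ k⟫ = Real.sqrt (lam (Fin.castLE hN k)) * q (Fin.castLE hN k) i := by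
    intro i k
    set j₀ := Fin.castLE hN k with hj₀
    have hpos := hlam_pos j₀ (by simpa [hj₀] using k.isLt)
    rw [hφ k, real_inner_smul_right, inner_sum]
    have : ∀ j, ⟪u i, q j₀ j • u j⟫ = C i j * q j₀ j := by
      intro j; rw [real_inner_smul_right, hC]; ring
    rw [Finset.sum_congr rfl fun j _ => this j, heig' j₀ i]
    rw [inv_mul_eq_iff_eq_mul₀ (hsq k : Real.sqrt (lam j₀) ≠ 0)]
    linear_combination (-q j₀ i) * Real.sq_sqrt hpos.le
  -- orthonormality of φ
  have hφon : ∀ k l : Fin N, ⟪φ k, φ l⟫ = if k = l then (1:ℝ) else 0 := by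
    intro k l
    set k₀ := Fin.castLE hN k with hk₀
    set l₀ := Fin.castLE hN l with hl₀
    rw [hφ k, real_inner_smul_left, sum_inner]
    have : ∀ j, ⟪q k₀ j • u j, φ l⟫ = q k₀ j * (Real.sqrt (lam l₀) * q l₀ j) := by
      intro j
      rw [real_inner_smul_left, hinner j l]
    rw [Finset.sum_congr rfl fun j _ => this j]
    have hsum : (∑ j, q k₀ j * (Real.sqrt (lam l₀) * q l₀ j))
        = Real.sqrt (lam l₀) * ∑ j, q k₀ j * q l₀ j := by
      rw [Finset.mul_sum]; exact Finset.sum_congr rfl fun j _ => by ring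
    rw [hsum, hq_orthonormal k₀ l₀]
    have hiff : k₀ = l₀ ↔ k = l := by
      constructor
      · intro h; exact Fin.castLE_injective hN h
      · intro h; simp [hk₀, hl₀, h]
    by_cases h : k = l
    · rw [if_pos (hiff.mpr h), if_pos h, mul_one]
      have hkl : l₀ = k₀ := (hiff.mpr h).symm
      rw [hkl]
      exact inv_mul_cancel₀ (hsq k)
    · rw [if_neg (fun hh => h (hiff.mp hh)), if_neg h]
      ring
  -- error for each i
  have herr : ∀ i : Fin m,
      ‖u i - ∑ k, ⟪u i, φ k⟫ • φ k‖ ^ 2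
        = ⟪u i, u i⟫ - ∑ k, ⟪u i, φ k⟫ ^ 2 := by
    intro i
    set v := ∑ k, ⟪u i, φ k⟫ • φ k with hv
    have huv : ⟪u i, v⟫ = ∑ k, ⟪u i, φ k⟫ ^ 2 := by
      rw [hv, inner_sum]
      exact Finset.sum_congr rfl fun k _ => by
        rw [real_inner_smul_right]; ring
    have hvv : ⟪v, v⟫ = ∑ k, ⟪u i, φ k⟫ ^ 2 := by
      rw [hv, sum_inner]
      refine Finset.sum_congr rfl fun k _ => ?_
      rw [real_inner_smul_left, inner_sum]
      have : ∀ l, ⟪φ k, ⟪u i, φ l⟫ • φ l⟫ = ⟪u i, φ l⟫ * (if k = l then (1:ℝ) else 0) := by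
        intro l; rw [real_inner_smul_right, hφon k l]
      rw [Finset.sum_congr rfl fun l _ => this l]
      simp [pow_two]
    have hns : ‖u i - v‖ ^ 2 = ⟪u i, u i⟫ - 2 * ⟪u i, v⟫ + ⟪v, v⟫ := by
      rw [← real_inner_self_eq_norm_sq, inner_sub_sub_self, real_inner_comm v (u i)]
      ring
    rw [hns, huv, hvv]; ring
  -- sum it up
  have h1 : ∑ i, ‖u i - ∑ k, ⟪u i, φ k⟫ • φ k‖ ^ 2
      = (∑ j, lam j) - ∑ k : Fin N, lam (Fin.castLE hN k) := by
    rw [Finset.sum_congr rfl fun i _ => herr i, Finset.sum_sub_distrib]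
    congr 1
    · rw [← htrace]
      exact Finset.sum_congr rfl fun i _ => (hC i i).symm
    · rw [Finset.sum_comm]
      refine Finset.sum_congr rfl fun k _ => ?_
      have : ∀ i, ⟪u i, φ k⟫ ^ 2 = lam (Fin.castLE hN k) * (q (Fin.castLE hN k) i * q (Fin.castLE hN k) i) := by
        intro i
        rw [hinner i k]
        have hpos := hlam_pos (Fin.castLE hN k) (by simpa using k.isLt)
        rw [mul_pow, Real.sq_sqrt hpos.le]
        ring
      rw [Finset.sum_congr rfl fun i _ => this i, ← Finset.mul_sum,
        hq_orthonormal (Fin.castLE hN k) (Fin.castLE hN k)]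
      simp
  rw [h1]
  -- index juggling
  have h2 : ∑ k : Fin N, lam (Fin.castLE hN k)
      = ∑ j ∈ Finset.univ.filter (fun j : Fin m => (j : ℕ) < N), lam j := by
    refine Finset.sum_bij' (fun k _ => Fin.castLE hN k)
      (fun j hj => ⟨(j : ℕ), by simpa using hj⟩) ?_ ?_ ?_ ?_ ?_
    · intro k _; simp [Fin.castLE]
    · intro j hj; simp
    · intro k _; simp [Fin.castLE]
    · intro j hj; simp [Fin.castLE]
    · intro k _; rfl
  have h3 := Finset.sum_filter_add_sum_filter_not Finset.univ
    (fun j : Fin m => (j : ℕ) < N) lam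
  have h4 : Finset.univ.filter (fun j : Fin m => ¬ (j : ℕ) < N)
      = Finset.univ.filter (fun j : Fin m => N ≤ (j : ℕ)) := by
    apply Finset.filter_congr; intro j _; simp [not_lt]
  rw [h2, ← h3, h4]; ring
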